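/- Assume the pair (A,B) is reachable. If M₁ and M₂ are n×n complex matrices that both commute with A and satisfy (1/2)(M₁ 𝒢 + 𝒢 M₁*) = (1/2)(M₂ 𝒢 + 𝒢 M₂*), where 𝒢 = ∑_{k=0}^∞ Aᵏ B B* (A*)ᵏ is the reachability Gramian, then there exists a real number α such that M₁ − M₂ = iα·I; that is, the representing matrix M is unique modulo an additive purely imaginary multiple of the identity. -/

import Mathlib

open Matrix Filter Topology

namespace RepAux

attribute [local instance] Matrix.linftyOpNormedAddCommGroup Matrix.linftyOpNormedRing
  Matrix.linftyOpNormedAlgebra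

variable {n : ℕ}

open scoped NNReal ENNReal

lemma specRad_lt (A : Matrix (Fin n) (Fin n) ℂ)
    (hA : ∀ μ ∈ spectrum ℂ A, ‖μ‖ < 1) : spectralRadius ℂ A < 1 := by
  have hfin := Matrix.finite_spectrum (R := ℂ) A
  set s := hfin.toFinset with hs
  have hle : spectralRadius ℂ A ≤ s.sup fun μ => (‖μ‖₊ : ℝ≥0∞) := by
    rw [spectralRadius]
    exact iSup₂_le fun μ hμ =>
      Finset.le_sup (f := fun μ => (‖μ‖₊ : ℝ≥0∞)) (hfin.mem_toFinset.mpr hμ)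
  refine hle.trans_lt ?_
  rw [Finset.sup_lt_iff (by norm_num : (⊥ : ℝ≥0∞) < 1)]
  intro μ hμ
  have hμ' : μ ∈ spectrum ℂ A := hfin.mem_toFinset.mp hμ
  have := hA μ hμ'
  simpa [← ENNReal.coe_one, ENNReal.coe_lt_coe, ← NNReal.coe_lt_coe] using this

lemma pow_bound (A : Matrix (Fin n) (Fin n) ℂ)
    (hA : ∀ μ ∈ spectrum ℂ A, ‖μ‖ < 1) :
    ∃ r : ℝ≥0, r < 1 ∧ ∀ᶠ k : ℕ in atTop, ‖A ^ k‖₊ ≤ r ^ k := by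
  obtain ⟨r, hr1, hr2⟩ := exists_between (specRad_lt A hA)
  lift r to ℝ≥0 using (hr2.trans (by norm_num : (1:ℝ≥0∞) < ⊤)).ne
  refine ⟨r, by exact_mod_cast hr2, ?_⟩
  have h := spectrum.pow_nnnorm_pow_one_div_tendsto_nhds_spectralRadius (A : Matrix (Fin n) (Fin n) ℂ)
  have hev : ∀ᶠ k : ℕ in atTop, (‖A ^ k‖₊ : ℝ≥0∞) ^ (1 / (k : ℝ)) < (r : ℝ≥0∞) :=
    h.eventually_lt_const hr1
  filter_upwards [hev, eventually_ge_atTop 1] with k hk hk1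
  have hk0 : (k : ℝ) ≠ 0 := by positivity
  have h2 := ENNReal.rpow_le_rpow hk.le (by positivity : (0:ℝ) ≤ (k : ℝ))
  rw [← ENNReal.rpow_mul, one_div, inv_mul_cancel₀ hk0, ENNReal.rpow_one,
    ENNReal.rpow_natCast, ← ENNReal.coe_pow, ENNReal.coe_le_coe] at h2
  exact h2

lemma summable_conj (A : Matrix (Fin n) (Fin n) ℂ)
    (hA : ∀ μ ∈ spectrum ℂ A, ‖μ‖ < 1) (X : Matrix (Fin n) (Fin n) ℂ) :
    Summable (fun k : ℕ => A ^ k * X * Aᴴ ^ k) := by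
  have hAH : ∀ μ ∈ spectrum ℂ Aᴴ, ‖μ‖ < 1 := by
    intro μ hμ
    rw [← Matrix.star_eq_conjTranspose, spectrum.map_star, Set.mem_star] at hμ
    simpa using hA _ hμ
  obtain ⟨r, hr, hev⟩ := pow_bound A hA
  obtain ⟨t, ht, hev'⟩ := pow_bound Aᴴ hAH
  have hr' : (r : ℝ) < 1 := by exact_mod_cast hr
  have ht' : (t : ℝ) < 1 := by exact_mod_cast ht
  have hrt : (r : ℝ) * t < 1 := by nlinarith [r.coe_nonneg, t.coe_nonneg]
  refine Summable.of_norm_bounded_eventually_nat (g := fun k => ‖X‖ * ((r : ℝ) * t) ^ k) ?_ ?_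
  · exact (summable_geometric_of_lt_one (by positivity) hrt).mul_left _
  · filter_upwards [hev, hev'] with k h1 h2
    have h1' : ‖A ^ k‖ ≤ (r : ℝ) ^ k := by exact_mod_cast h1
    have h2' : ‖Aᴴ ^ k‖ ≤ (t : ℝ) ^ k := by exact_mod_cast h2
    calc ‖A ^ k * X * Aᴴ ^ k‖ ≤ ‖A ^ k * X‖ * ‖Aᴴ ^ k‖ := norm_mul_le _ _
      _ ≤ (‖A ^ k‖ * ‖X‖) * ‖Aᴴ ^ k‖ := by
          gcongr
          exact norm_mul_le _ _
      _ ≤ ((r : ℝ) ^ k * ‖X‖) * (t : ℝ) ^ k := by gcongr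
      _ = ‖X‖ * ((r : ℝ) * t) ^ k := by rw [mul_pow]; ring

lemma tsum_shift (A : Matrix (Fin n) (Fin n) ℂ)
    (hA : ∀ μ ∈ spectrum ℂ A, ‖μ‖ < 1) (X : Matrix (Fin n) (Fin n) ℂ) :
    (∑' k : ℕ, A ^ k * X * Aᴴ ^ k) = X + A * (∑' k : ℕ, A ^ k * X * Aᴴ ^ k) * Aᴴ := by
  have hsum := summable_conj A hA X
  have hterm : ∀ k : ℕ, A ^ (k + 1) * X * Aᴴ ^ (k + 1) = A * (A ^ k * X * Aᴴ ^ k) * Aᴴ := by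
    intro k
    rw [pow_succ', pow_succ]
    noncomm_ring
  have key : (∑' k : ℕ, A ^ (k + 1) * X * Aᴴ ^ (k + 1))
      = A * (∑' k : ℕ, A ^ k * X * Aᴴ ^ k) * Aᴴ := by
    calc (∑' k : ℕ, A ^ (k + 1) * X * Aᴴ ^ (k + 1))
        = ∑' k : ℕ, (A * (A ^ k * X * Aᴴ ^ k)) * Aᴴ := by
          exact tsum_congr fun k => by rw [hterm k, Matrix.mul_assoc, ← Matrix.mul_assoc]
      _ = (∑' k : ℕ, A * (A ^ k * X * Aᴴ ^ k)) * Aᴴ := (hsum.mul_left A).tsum_mul_right Aᴴ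
      _ = A * (∑' k : ℕ, A ^ k * X * Aᴴ ^ k) * Aᴴ := by rw [hsum.tsum_mul_left A]
  calc (∑' k : ℕ, A ^ k * X * Aᴴ ^ k)
      = A ^ 0 * X * Aᴴ ^ 0 + ∑' k : ℕ, A ^ (k + 1) * X * Aᴴ ^ (k + 1) :=
        Summable.tsum_eq_zero_add hsum
    _ = X + A * (∑' k : ℕ, A ^ k * X * Aᴴ ^ k) * Aᴴ := by rw [key]; simp

lemma eq_zero_of_tsum_zero (A : Matrix (Fin n) (Fin n) ℂ)
    (hA : ∀ μ ∈ spectrum ℂ A, ‖μ‖ < 1) (X : Matrix (Fin n) (Fin n) ℂ)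
    (h : (∑' k : ℕ, A ^ k * X * Aᴴ ^ k) = 0) : X = 0 := by
  have := tsum_shift A hA X
  rw [h] at this
  simpa using this.symm

end RepAux

/-- With `(A,B)` reachable, if `M₁` and `M₂` both commute with `A` and
`½(M₁ 𝒢 + 𝒢 M₁*) = ½(M₂ 𝒢 + 𝒢 M₂*)` (where `𝒢` is the reachability Gramian), then
`M₁ − M₂ = iα·I` for some real `α`. -/
theorem representing_matrix_unique_mod_imaginary
    {n : ℕ} (hn : 1 ≤ n)
    (A : Matrix (Fin n) (Fin n) ℂ) (B : Matrix (Fin n) (Fin 1) ℂ)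
    (hA : ∀ μ ∈ spectrum ℂ A, ‖μ‖ < 1)
    (hreach : IsUnit (Matrix.of fun (i : Fin n) (j : Fin n) => (A ^ (j : ℕ) * B) i 0))
    (M₁ M₂ : Matrix (Fin n) (Fin n) ℂ)
    (hM₁ : M₁ * A = A * M₁) (hM₂ : M₂ * A = A * M₂)
    (heq : (1 / 2 : ℂ) • (M₁ * (∑' k : ℕ, A ^ k * B * Bᴴ * (Aᴴ) ^ k) +
        (∑' k : ℕ, A ^ k * B * Bᴴ * (Aᴴ) ^ k) * M₁ᴴ) =
      (1 / 2 : ℂ) • (M₂ * (∑' k : ℕ, A ^ k * B * Bᴴ * (Aᴴ) ^ k) +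
        (∑' k : ℕ, A ^ k * B * Bᴴ * (Aᴴ) ^ k) * M₂ᴴ)) :
    ∃ α : ℝ, M₁ - M₂ = ((α : ℂ) * Complex.I) • (1 : Matrix (Fin n) (Fin n) ℂ) := by
  classical
  set N : Matrix (Fin n) (Fin n) ℂ := M₁ - M₂ with hNdef
  have hNA : N * A = A * N := by
    simp only [hNdef, sub_mul, mul_sub, hM₁, hM₂]
  -- rewrite the Gramian with the square matrix B*Bᴴ
  have hGram : (∑' k : ℕ, A ^ k * B * Bᴴ * (Aᴴ) ^ k)
      = ∑' k : ℕ, A ^ k * (B * Bᴴ) * (Aᴴ) ^ k :=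
    tsum_congr fun k => by rw [Matrix.mul_assoc (A ^ k) B Bᴴ]
  set G : Matrix (Fin n) (Fin n) ℂ := ∑' k : ℕ, A ^ k * (B * Bᴴ) * (Aᴴ) ^ k with hGdef
  rw [hGram] at heq
  -- cancel the ½ factor
  have h2 : M₁ * G + G * M₁ᴴ = M₂ * G + G * M₂ᴴ := by
    have := congrArg (fun X => (2 : ℂ) • X) heq
    simpa [smul_smul] using this
  have hNG : N * G + G * Nᴴ = 0 := by
    have hexp : N * G + G * Nᴴ = (M₁ * G + G * M₁ᴴ) - (M₂ * G + G * M₂ᴴ) := by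
      simp only [hNdef, Matrix.conjTranspose_sub, Matrix.sub_mul, Matrix.mul_sub]
      abel
    rw [hexp, h2, sub_self]
  -- commutation of N with powers of A
  have hcomm : ∀ k : ℕ, N * A ^ k = A ^ k * N := fun k =>
    ((Commute.pow_right (hNA : Commute N A) k) : N * A ^ k = A ^ k * N)
  have hcommH : ∀ k : ℕ, (Aᴴ) ^ k * Nᴴ = Nᴴ * (Aᴴ) ^ k := by
    intro k
    have h1 : Aᴴ * Nᴴ = Nᴴ * Aᴴ := by
      rw [← Matrix.conjTranspose_mul, ← Matrix.conjTranspose_mul, hNA]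
    exact ((Commute.pow_right (h1.symm : Commute Nᴴ Aᴴ) k) : Nᴴ * (Aᴴ) ^ k = (Aᴴ) ^ k * Nᴴ).symm
  have hsum := RepAux.summable_conj A hA
  -- N * G = ∑' A^k (N B Bᴴ) Aᴴ^k , G * Nᴴ = ∑' A^k (B Bᴴ Nᴴ) Aᴴ^k
  have hNGl : N * G = ∑' k : ℕ, A ^ k * (N * (B * Bᴴ)) * (Aᴴ) ^ k := by
    rw [hGdef, ← (hsum (B * Bᴴ)).tsum_mul_left N]
    refine tsum_congr fun k => ?_
    calc N * (A ^ k * (B * Bᴴ) * (Aᴴ) ^ k)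
        = (N * A ^ k) * (B * Bᴴ) * (Aᴴ) ^ k := by noncomm_ring
      _ = (A ^ k * N) * (B * Bᴴ) * (Aᴴ) ^ k := by rw [hcomm k]
      _ = A ^ k * (N * (B * Bᴴ)) * (Aᴴ) ^ k := by noncomm_ring
  have hNGr : G * Nᴴ = ∑' k : ℕ, A ^ k * ((B * Bᴴ) * Nᴴ) * (Aᴴ) ^ k := by
    rw [hGdef, ← (hsum (B * Bᴴ)).tsum_mul_right Nᴴ]
    refine tsum_congr fun k => ?_
    calc A ^ k * (B * Bᴴ) * (Aᴴ) ^ k * Nᴴ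
        = A ^ k * (B * Bᴴ) * ((Aᴴ) ^ k * Nᴴ) := by noncomm_ring
      _ = A ^ k * (B * Bᴴ) * (Nᴴ * (Aᴴ) ^ k) := by rw [hcommH k]
      _ = A ^ k * ((B * Bᴴ) * Nᴴ) * (Aᴴ) ^ k := by noncomm_ring
  have hP : N * (B * Bᴴ) + (B * Bᴴ) * Nᴴ = 0 := by
    apply RepAux.eq_zero_of_tsum_zero A hA
    have : (∑' k : ℕ, A ^ k * (N * (B * Bᴴ) + (B * Bᴴ) * Nᴴ) * (Aᴴ) ^ k)
        = (∑' k : ℕ, A ^ k * (N * (B * Bᴴ)) * (Aᴴ) ^ k)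
          + ∑' k : ℕ, A ^ k * ((B * Bᴴ) * Nᴴ) * (Aᴴ) ^ k := by
      rw [← Summable.tsum_add (hsum _) (hsum _)]
      exact tsum_congr fun k => by noncomm_ring
    rw [this, ← hNGl, ← hNGr, hNG]
  -- pointwise consequence : (N B) Bᴴ + B (N B)ᴴ = 0
  obtain ⟨v, hv⟩ : ∃ v, N * B = v := ⟨_, rfl⟩
  have hvB : v * Bᴴ + B * vᴴ = 0 := by
    rw [← hv, Matrix.conjTranspose_mul, Matrix.mul_assoc N B Bᴴ,
      ← Matrix.mul_assoc B Bᴴ Nᴴ]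
    exact hP
  have hij : ∀ i j : Fin n, v i 0 * star (B j 0) + B i 0 * star (v j 0) = 0 := by
    intro i j
    have h0 := congrFun (congrFun hvB i) j
    simpa only [Matrix.add_apply, Matrix.zero_apply, Matrix.mul_apply, Fin.sum_univ_one,
      Matrix.conjTranspose_apply] using h0
  -- B ≠ 0
  have hB : ∃ i₀ : Fin n, B i₀ 0 ≠ 0 := by
    by_contra h
    push_neg at h
    have hzero : (Matrix.of fun (i : Fin n) (j : Fin n) => (A ^ (j : ℕ) * B) i 0)
        = (0 : Matrix (Fin n) (Fin n) ℂ) := by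
      ext i j
      simp [Matrix.mul_apply, h]
    rw [hzero] at hreach
    have : Nonempty (Fin n) := ⟨⟨0, hn⟩⟩
    rw [Matrix.isUnit_iff_isUnit_det, Matrix.det_zero] at hreach
    exact (not_isUnit_zero hreach)
  obtain ⟨i₀, hb0⟩ := hB
  set μ : ℂ := -(star (v i₀ 0)) / star (B i₀ 0) with hμdef
  have hsb0 : star (B i₀ 0) ≠ 0 := star_ne_zero.mpr hb0
  have hw : ∀ i : Fin n, v i 0 = μ * B i 0 := by
    intro i
    have h := hij i i₀
    rw [hμdef, div_mul_eq_mul_div, eq_div_iff hsb0]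
    linear_combination h
  -- μ is purely imaginary
  have hμ : μ + star μ = 0 := by
    have h := hij i₀ i₀
    rw [hw i₀] at h
    simp only [star_mul'] at h
    have hbb : B i₀ 0 * star (B i₀ 0) ≠ 0 := mul_ne_zero hb0 hsb0
    have hkey : (μ + star μ) * (B i₀ 0 * star (B i₀ 0)) = 0 := by
      linear_combination h
    exact (mul_eq_zero.mp hkey).resolve_right hbb
  have hre : μ.re = 0 := by
    have h' := congrArg Complex.re hμ
    simp only [Complex.add_re, Complex.zero_re] at h'
    have hsr : (star μ).re = μ.re := by
      simp [Complex.star_def]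
    rw [hsr] at h'
    linarith
  -- N * B = μ • B
  have hNB : N * B = μ • B := by
    rw [hv]
    ext i j
    have hj : j = 0 := Subsingleton.elim _ _
    subst hj
    simp [hw i, Matrix.smul_apply]
  -- conclude N = μ • 1 using reachability
  set Γ : Matrix (Fin n) (Fin n) ℂ :=
    Matrix.of fun (i : Fin n) (j : Fin n) => (A ^ (j : ℕ) * B) i 0 with hΓdef
  have hNΓ : N * Γ = (μ • (1 : Matrix (Fin n) (Fin n) ℂ)) * Γ := by
    rw [Matrix.smul_mul, Matrix.one_mul]
    ext i j
    have hcol : ∀ k, Γ k j = (A ^ (j : ℕ) * B) k 0 := fun k => rfl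
    have : (N * Γ) i j = (N * (A ^ (j : ℕ) * B)) i 0 := by
      rw [Matrix.mul_apply, Matrix.mul_apply]
      exact Finset.sum_congr rfl fun k _ => by rw [hcol k]
    rw [this]
    have hchain : N * (A ^ (j : ℕ) * B) = μ • (A ^ (j : ℕ) * B) := by
      calc N * (A ^ (j : ℕ) * B) = (N * A ^ (j : ℕ)) * B := by rw [Matrix.mul_assoc]
        _ = (A ^ (j : ℕ) * N) * B := by rw [hcomm]
        _ = A ^ (j : ℕ) * (N * B) := by rw [Matrix.mul_assoc]
        _ = A ^ (j : ℕ) * (μ • B) := by rw [hNB]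
        _ = μ • (A ^ (j : ℕ) * B) := by rw [Matrix.mul_smul]
    rw [hchain]
    rfl
  have hNfinal : N = μ • (1 : Matrix (Fin n) (Fin n) ℂ) := hreach.mul_right_cancel hNΓ
  refine ⟨μ.im, ?_⟩
  have hμim : μ = (μ.im : ℂ) * Complex.I := by
    conv_lhs => rw [← Complex.re_add_im μ, hre]
    simp
  show N = _
  rw [hNfinal]
  exact congrArg (fun z : ℂ => z • (1 : Matrix (Fin n) (Fin n) ℂ)) hμim
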